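/- If φ is a normalized symmetric n-cochain (n ≥ 2) of a group G with coefficients in a G-module M, i.e. φ ∈ CS^n_N(G,M), then φ(g₁,…,gₙ) = 0 whenever g_{i+1} = g_i^{-1} for some 1 ≤ i ≤ n−1. -/
import Mathlib


/-- If `φ ∈ CS^n_N(G,M)` (a normalized symmetric `n`-cochain, `n ≥ 2`),
then `φ(g₁,…,gₙ) = 0` whenever `g_{i+1} = g_i⁻¹` for some `1 ≤ i ≤ n-1`.
Cochains are maps `(Fin n → G) → M`; symmetry means invariance under the
transpositions `τ₁, …, τₙ` of the `Σ_{n+1}`-action. -/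
theorem stmt0 {G : Type*} [Group G] {M : Type*} [AddCommGroup M]
    [DistribMulAction G M] {n : ℕ} (hn : 2 ≤ n)
    (φ : (Fin n → G) → M)
    -- φ is normalized
    (hnorm : ∀ g : Fin n → G, (∃ j, g j = 1) → φ g = 0)
    -- invariance under τ₁
    (hτ1 : ∀ g : Fin n → G,
      φ g = - (g ⟨0, by omega⟩ •
        φ (fun j => if (j : ℕ) = 0 then (g ⟨0, by omega⟩)⁻¹
          else if (j : ℕ) = 1 then g ⟨0, by omega⟩ * g ⟨1, by omega⟩
          else g j)))
    -- invariance under τ_i for 1 < i < n (1-indexed)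
    (hτmid : ∀ i : ℕ, (h1 : 1 < i) → (h2 : i < n) → ∀ g : Fin n → G,
      φ g = - φ (fun j => if (j : ℕ) = i - 2 then g j * g ⟨i - 1, by omega⟩
        else if (j : ℕ) = i - 1 then (g ⟨i - 1, by omega⟩)⁻¹
        else if (j : ℕ) = i then g ⟨i - 1, by omega⟩ * g j
        else g j))
    -- invariance under τ_n
    (hτn : ∀ g : Fin n → G,
      φ g = - φ (fun j => if (j : ℕ) = n - 2 then g j * g ⟨n - 1, by omega⟩
        else if (j : ℕ) = n - 1 then (g ⟨n - 1, by omega⟩)⁻¹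
        else g j))
    -- conclusion: φ vanishes when consecutive entries are inverse to each other
    (g : Fin n → G) (i : ℕ) (hi1 : 1 ≤ i) (hi2 : i ≤ n - 1)
    (hg : g ⟨i, by omega⟩ = (g ⟨i - 1, by omega⟩)⁻¹) :
    φ g = 0 := by
  rcases eq_or_lt_of_le (show i+1 ≤ n by omega) with hcase | hcase
  · -- i+1 = n, use τ_n
    rw [hτn g, hnorm, neg_zero]
    refine ⟨⟨i-1, by omega⟩, ?_⟩
    simp only [Fin.val_mk]
    rw [if_pos (by omega : i - 1 = n - 2)]
    have hfin : (⟨n-1, by omega⟩ : Fin n) = ⟨i, by omega⟩ := by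
      apply Fin.ext; simp; omega
    rw [hfin, hg, mul_inv_cancel]
  · -- i+1 < n, use τ_{i+1}
    rw [hτmid (i+1) (by omega) (by omega) g, hnorm, neg_zero]
    refine ⟨⟨i-1, by omega⟩, ?_⟩
    simp only [Fin.val_mk]
    rw [if_pos (by omega : i - 1 = i + 1 - 2)]
    have hfin : (⟨i+1-1, by omega⟩ : Fin n) = ⟨i, by omega⟩ := by
      apply Fin.ext; simp
    rw [hfin, hg, mul_inv_cancel]
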